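/- The bilinear pairing (a, b) ↦ ε(a·b) on A = R[X]/((X - x₁)(X - x₂)) (where ε sends 1 ↦ 0, X ↦ 1) is non-degenerate when R is an integral domain; that is, if ε(a·b) = 0 for all b ∈ A then a = 0. -/

import Mathlib

open Polynomial

/-- Over an integral domain `R`, the pairing `(a, b) ↦ ε(a·b)` on
`A = R[X]/((X - x₁)(X - x₂))`, where `ε(1) = 0` and `ε(X) = 1`, is
non-degenerate: if `ε(a·b) = 0` for all `b` then `a = 0`. -/
theorem stmt4 (R : Type*) [CommRing R] [IsDomain R] (x₁ x₂ : R)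
    (ε : (Polynomial R ⧸ Ideal.span {(X - C x₁) * (X - C x₂)}) →ₗ[R] R)
    (hε1 : ε 1 = 0)
    (hεX : ε (Ideal.Quotient.mk (Ideal.span {(X - C x₁) * (X - C x₂)}) X) = 1)
    (a : Polynomial R ⧸ Ideal.span {(X - C x₁) * (X - C x₂)})
    (ha : ∀ b : Polynomial R ⧸ Ideal.span {(X - C x₁) * (X - C x₂)}, ε (a * b) = 0) :
    a = 0 := by
  obtain ⟨p, rfl⟩ := Ideal.Quotient.mk_surjective a
  have hmonic : ((X - C x₁) * (X - C x₂)).Monic :=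
    (monic_X_sub_C x₁).mul (monic_X_sub_C x₂)
  have hdegf : ((X - C x₁) * (X - C x₂)).degree = 2 := by
    rw [degree_mul, degree_X_sub_C, degree_X_sub_C]; rfl
  have hkey : Ideal.Quotient.mk (Ideal.span {(X - C x₁) * (X - C x₂)}) p =
      Ideal.Quotient.mk (Ideal.span {(X - C x₁) * (X - C x₂)})
        (p %ₘ ((X - C x₁) * (X - C x₂))) := by
    rw [Ideal.Quotient.mk_eq_mk_iff_sub_mem, Ideal.mem_span_singleton]
    exact ⟨p /ₘ ((X - C x₁) * (X - C x₂)), by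
      rw [sub_eq_iff_eq_add, add_comm]; exact (modByMonic_add_div p ((X - C x₁) * (X - C x₂))).symm⟩
  have hdeg : (p %ₘ ((X - C x₁) * (X - C x₂))).degree ≤ 1 := by
    have h := degree_modByMonic_lt p hmonic
    rw [hdegf] at h
    exact Order.le_of_lt_succ (by exact_mod_cast h)
  set c₀ := (p %ₘ ((X - C x₁) * (X - C x₂))).coeff 0 with hc₀
  set c₁ := (p %ₘ ((X - C x₁) * (X - C x₂))).coeff 1 with hc₁
  have hq : p %ₘ ((X - C x₁) * (X - C x₂)) = C c₁ * X + C c₀ :=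
    eq_X_add_C_of_degree_le_one hdeg
  have ha' : Ideal.Quotient.mk (Ideal.span {(X - C x₁) * (X - C x₂)}) p =
      c₁ • Ideal.Quotient.mk (Ideal.span {(X - C x₁) * (X - C x₂)}) X +
      c₀ • (1 : Polynomial R ⧸ Ideal.span {(X - C x₁) * (X - C x₂)}) := by
    rw [hkey, hq, map_add, map_mul]
    rw [show Ideal.Quotient.mk (Ideal.span {(X - C x₁) * (X - C x₂)}) (C c₀) =
        algebraMap R _ c₀ from rfl,
      show Ideal.Quotient.mk (Ideal.span {(X - C x₁) * (X - C x₂)}) (C c₁) =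
        algebraMap R _ c₁ from rfl,
      ← Algebra.smul_def]
    rw [show (algebraMap R (Polynomial R ⧸ Ideal.span {(X - C x₁) * (X - C x₂)})) c₀
        = c₀ • 1 from ((Algebra.smul_def c₀ (1 : Polynomial R ⧸ Ideal.span {(X - C x₁) * (X - C x₂)})).trans (mul_one _)).symm]
  have h1 : c₁ = 0 := by
    have h := ha 1
    rw [mul_one, ha', map_add, map_smul, map_smul, hεX, hε1, smul_zero,
      add_zero, smul_eq_mul, mul_one] at h
    exact h
  have h0 : c₀ = 0 := by
    have h := ha (Ideal.Quotient.mk (Ideal.span {(X - C x₁) * (X - C x₂)}) X)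
    rw [ha', h1, zero_smul, zero_add, smul_mul_assoc, one_mul, map_smul, hεX,
      smul_eq_mul, mul_one] at h
    exact h
  rw [ha', h1, h0, zero_smul, zero_smul, add_zero]
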